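/- Two A-lattices (L, ‖·‖), (L', ‖·‖') over A = k[t] are isometric (there exists an A-module isomorphism preserving the norm) if and only if they have the same vector of successive minima. -/

import Mathlib

noncomputable def degA {k : Type*} [Field k] (a : Polynomial k) : WithBot ℝ :=
  WithBot.map (fun n : ℕ => (n : ℝ)) a.degree

namespace Stmt12Aux
set_option linter.unusedSectionVars false
set_option maxHeartbeats 1000000

open Polynomial

variable {k : Type*} [Field k]

lemma degA_zero : degA (0 : Polynomial k) = ⊥ := by
  simp [degA, Polynomial.degree_zero]

lemma degA_eq_natDegree (a : Polynomial k) (ha : a ≠ 0) :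
    degA a = ((a.natDegree : ℝ) : WithBot ℝ) := by
  rw [degA, Polynomial.degree_eq_natDegree ha, Nat.cast_withBot, WithBot.map_coe]

lemma degA_ne_bot (a : Polynomial k) (ha : a ≠ 0) : degA a ≠ ⊥ := by
  rw [degA_eq_natDegree a ha]; exact WithBot.coe_ne_bot

lemma degA_C (c : k) (hc : c ≠ 0) : degA (Polynomial.C c) = ((0:ℝ) : WithBot ℝ) := by
  rw [degA, Polynomial.degree_C hc]
  show WithBot.map _ (((0:ℕ) : WithBot ℕ)) = _
  rw [Nat.cast_withBot, WithBot.map_coe]; norm_num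

lemma degA_X_pow (d : ℕ) : degA ((Polynomial.X : Polynomial k) ^ d) = ((d : ℝ) : WithBot ℝ) := by
  rw [degA, Polynomial.degree_X_pow]
  show WithBot.map _ (((d:ℕ) : WithBot ℕ)) = _
  rw [Nat.cast_withBot, WithBot.map_coe]

lemma degA_le_iff (a : Polynomial k) (ha : a ≠ 0) (b : Polynomial k) (hb : b ≠ 0) :
    degA a ≤ degA b ↔ a.natDegree ≤ b.natDegree := by
  rw [degA_eq_natDegree a ha, degA_eq_natDegree b hb, WithBot.coe_le_coe, Nat.cast_le]

variable {L : Type*} [AddCommGroup L] [Module (Polynomial k) L]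

lemma N_zero (N : L → WithBot ℝ) (hzero : ∀ x : L, N x = ⊥ ↔ x = 0) : N (0 : L) = ⊥ :=
  (hzero 0).2 rfl

lemma N_neg (N : L → WithBot ℝ)
    (hsmul : ∀ (a : Polynomial k) (x : L), N (a • x) = degA a + N x) (x : L) :
    N (-x) = N x := by
  have h1 : ((-1 : Polynomial k)) • x = -x := by simp
  rw [← h1, hsmul]
  have : degA (-1 : Polynomial k) = ((0:ℝ) : WithBot ℝ) := by
    have : (-1 : Polynomial k) = Polynomial.C (-1 : k) := by simp
    rw [this, degA_C _ (by norm_num)]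
  rw [this]; exact zero_add (N x)

lemma N_sum_le (N : L → WithBot ℝ)
    (hadd : ∀ x y : L, N (x + y) ≤ max (N x) (N y))
    (hzero : ∀ x : L, N x = ⊥ ↔ x = 0)
    {ι : Type*} (s : Finset ι) (f : ι → L) :
    N (∑ i ∈ s, f i) ≤ s.sup fun i => N (f i) := by
  classical
  induction s using Finset.induction_on with
  | empty => simp [N_zero N hzero]
  | @insert a s ha ih =>
    rw [Finset.sum_insert ha, Finset.sup_insert]
    exact le_trans (hadd _ _) (max_le_max le_rfl ih)

lemma N_add_eq_right (N : L → WithBot ℝ)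
    (hadd : ∀ x y : L, N (x + y) ≤ max (N x) (N y))
    (hsmul : ∀ (a : Polynomial k) (x : L), N (a • x) = degA a + N x)
    {u v : L} (h : N u < N v) : N (u + v) = N v := by
  refine le_antisymm (le_trans (hadd u v) (max_le h.le le_rfl)) ?_
  by_contra hc
  push_neg at hc
  have h2 : N v ≤ max (N (u + v)) (N (-u)) := by
    have := hadd (u + v) (-u)
    simpa using this
  rw [N_neg N hsmul] at h2
  exact lt_irrefl _ (lt_of_le_of_lt h2 (max_lt hc h))


variable [Module k L] [IsScalarTower k (Polynomial k) L]

lemma N_k_smul (N : L → WithBot ℝ)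
    (hsmul : ∀ (a : Polynomial k) (x : L), N (a • x) = degA a + N x)
    (c : k) (hc : c ≠ 0) (x : L) : N (c • x) = N x := by
  have h1 : c • x = (Polynomial.C c) • x := by
    rw [← Polynomial.algebraMap_eq, algebraMap_smul]
  rw [h1, hsmul, degA_C c hc]
  exact zero_add (N x)

lemma distinct_norm_li (N : L → WithBot ℝ)
    (hadd : ∀ x y : L, N (x + y) ≤ max (N x) (N y))
    (hsmul : ∀ (a : Polynomial k) (x : L), N (a • x) = degA a + N x)
    (hzero : ∀ x : L, N x = ⊥ ↔ x = 0)
    {ι : Type*} (g : ι → L) (hg0 : ∀ i, g i ≠ 0)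
    (hginj : ∀ i j, N (g i) = N (g j) → i = j) :
    LinearIndependent k g := by
  classical
  rw [linearIndependent_iff']
  intro s c hc
  by_contra hex
  push_neg at hex
  obtain ⟨i₀, hi₀s, hi₀⟩ := hex
  set s' : Finset ι := s.filter (fun i => c i ≠ 0) with hs'
  have hs'ne : s'.Nonempty := ⟨i₀, Finset.mem_filter.2 ⟨hi₀s, hi₀⟩⟩
  have hsum' : ∑ i ∈ s', c i • g i = 0 := by
    rw [← hc]
    exact Finset.sum_filter_of_ne (fun i _ h => by
      intro hci; exact h (by rw [hci, zero_smul]))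
  obtain ⟨j, hjs', hj⟩ := Finset.exists_mem_eq_sup s' hs'ne (fun i => N (g i))
  have hjne : N (g j) ≠ ⊥ := fun h => hg0 j ((hzero _).1 h)
  have hrest : N (∑ i ∈ s'.erase j, c i • g i) < N (g j) := by
    refine lt_of_le_of_lt (N_sum_le N hadd hzero _ _) ?_
    rw [Finset.sup_lt_iff (Ne.bot_lt hjne)]
    intro i hi
    obtain ⟨hij, his'⟩ := Finset.mem_erase.1 hi
    have hci : c i ≠ 0 := (Finset.mem_filter.1 his').2
    rw [N_k_smul N hsmul _ hci]
    have hle : N (g i) ≤ N (g j) := hj ▸ Finset.le_sup (f := fun i => N (g i)) his'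
    exact lt_of_le_of_ne hle (fun h => hij (hginj i j h))
  have hsplit : ∑ i ∈ s', c i • g i = (∑ i ∈ s'.erase j, c i • g i) + c j • g j := by
    rw [← Finset.sum_erase_add s' _ hjs']
  have hNj : N (c j • g j) = N (g j) := N_k_smul N hsmul _ (Finset.mem_filter.1 hjs').2 (g j)
  have : N (∑ i ∈ s', c i • g i) = N (g j) := by
    rw [hsplit, N_add_eq_right N hadd hsmul (hNj ▸ hrest), hNj]
  rw [hsum', N_zero N hzero] at this
  exact hjne this.symm

lemma exists_min (N : L → WithBot ℝ)
    (hadd : ∀ x y : L, N (x + y) ≤ max (N x) (N y))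
    (hsmul : ∀ (a : Polynomial k) (x : L), N (a • x) = degA a + N x)
    (hzero : ∀ x : L, N x = ⊥ ↔ x = 0)
    (hfin : ∀ r : ℝ, ∃ S : Finset L,
      {x : L | N x ≤ (r : ℝ)} ⊆ (Submodule.span k (S : Set L) : Set L))
    (C : Set L) (hCne : C.Nonempty) (hC0 : ∀ x ∈ C, x ≠ 0) :
    ∃ x ∈ C, ∀ y ∈ C, N x ≤ N y := by
  classical
  obtain ⟨x₀, hx₀⟩ := hCne
  have hx₀0 : x₀ ≠ 0 := hC0 x₀ hx₀
  have hNx₀ : N x₀ ≠ ⊥ := fun h => hx₀0 ((hzero _).1 h)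
  obtain ⟨r₀, hr₀⟩ := WithBot.ne_bot_iff_exists.1 hNx₀
  set V : Set (WithBot ℝ) := N '' {x | x ∈ C ∧ N x ≤ N x₀} with hV
  have hVne : V.Nonempty := ⟨N x₀, ⟨x₀, ⟨hx₀, le_rfl⟩, rfl⟩⟩
  have hVfin : V.Finite := by
    obtain ⟨S, hS⟩ := hfin r₀
    have hrep : ∀ v : V, ∃ x : L, x ∈ C ∧ N x ≤ N x₀ ∧ N x = v := by
      rintro ⟨v, x, ⟨hxC, hxle⟩, rfl⟩
      exact ⟨x, hxC, hxle, rfl⟩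
    choose g hg1 hg2 hg3 using hrep
    have hli : LinearIndependent k g :=
      distinct_norm_li N hadd hsmul hzero g
        (fun v => hC0 _ (hg1 v))
        (fun i j h => Subtype.ext (by rw [← hg3 i, ← hg3 j, h]))
    have hsub : Set.range g ⊆ (Submodule.span k (S : Set L) : Set L) := by
      rintro _ ⟨v, rfl⟩
      apply hS
      show N (g v) ≤ (r₀ : ℝ)
      rw [hr₀]; exact hg2 v
    have : Finite V := hli.finite_of_le_span_finite g (S : Set L) hsub
    exact Set.finite_coe_iff.1 this
  obtain ⟨v, hvV, hvmin⟩ := Set.exists_min_image V id hVfin hVne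
  obtain ⟨x, ⟨hxC, hxle⟩, hxv⟩ := hvV
  refine ⟨x, hxC, fun y hy => ?_⟩
  by_cases hyle : N y ≤ N x₀
  · have : N y ∈ V := ⟨y, ⟨hy, hyle⟩, rfl⟩
    have := hvmin _ this
    rw [← hxv] at this
    exact this
  · push_neg at hyle
    exact le_trans hxle hyle.le

lemma sum_castLE {M : Type*} [AddCommMonoid M] {n : ℕ} {j : ℕ} (hj : j ≤ n) (f : Fin j → M) :
    (∑ i : Fin j, f i) = ∑ i : Fin n, if h : i.1 < j then f ⟨i.1, h⟩ else 0 := by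
  classical
  set G : ℕ → M := fun m => if h : m < j then f ⟨m, h⟩ else 0 with hG
  have h1 : (∑ i : Fin j, f i) = ∑ m ∈ Finset.range j, G m := by
    rw [← Fin.sum_univ_eq_sum_range G j]
    exact Finset.sum_congr rfl (fun i _ => by simp [hG, i.2])
  have h2 : (∑ i : Fin n, if h : i.1 < j then f ⟨i.1, h⟩ else 0) = ∑ m ∈ Finset.range n, G m :=
    Fin.sum_univ_eq_sum_range G n
  rw [h1, h2]
  refine Finset.sum_subset (Finset.range_subset_range.2 hj) (fun m _ hm => ?_)
  have : ¬ m < j := fun h => hm (Finset.mem_range.2 h)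
  simp [hG, this]

lemma snoc_li {m : ℕ} (p : Fin m → L) (w : L) (hp : LinearIndependent (Polynomial k) p)
    (hw : ∀ a : Polynomial k, a • w ∈ Submodule.span (Polynomial k) (Set.range p) → a = 0) :
    LinearIndependent (Polynomial k) (Fin.snoc p w) := by
  rw [Fintype.linearIndependent_iff]
  intro g hg
  rw [Fin.sum_univ_castSucc] at hg
  simp only [Fin.snoc_castSucc, Fin.snoc_last] at hg
  have hmem : g (Fin.last m) • w ∈ Submodule.span (Polynomial k) (Set.range p) := by
    have h1 : g (Fin.last m) • w = -∑ i : Fin m, g i.castSucc • p i :=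
      eq_neg_of_add_eq_zero_right hg
    rw [h1]
    exact Submodule.neg_mem _ (Submodule.sum_mem _ fun i _ =>
      Submodule.smul_mem _ _ (Submodule.subset_span ⟨i, rfl⟩))
  have hlast : g (Fin.last m) = 0 := hw _ hmem
  have hsum : ∑ i : Fin m, g i.castSucc • p i = 0 := by
    rw [hlast, zero_smul, add_zero] at hg; exact hg
  have hcast : ∀ i : Fin m, g i.castSucc = 0 :=
    Fintype.linearIndependent_iff.1 hp _ hsum
  intro i
  refine Fin.lastCases hlast (fun i => hcast i) i

/-- prefix of a tuple -/
def pre {n : ℕ} (y : Fin n → L) (j : Fin n) : Fin j.1 → L :=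
  fun m => y (Fin.castLE j.2.le m)

lemma pre_li {n : ℕ} (y : Fin n → L) (hy : LinearIndependent (Polynomial k) y) (j : Fin n) :
    LinearIndependent (Polynomial k) (pre y j) :=
  hy.comp (Fin.castLE j.2.le) (Fin.castLE_injective _)

lemma feas {n : ℕ} (y : Fin n → L) (hy : LinearIndependent (Polynomial k) y) (j : Fin n)
    (b : Polynomial k) (c : Fin n → Polynomial k) (hcj : c j ≠ 0)
    (w : L) (hw : b • w = ∑ i, c i • y i) :
    LinearIndependent (Polynomial k) (Fin.snoc (pre y j) w) := by
  classical
  refine snoc_li _ _ (pre_li y hy j) ?_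
  intro a ha
  obtain ⟨e, he⟩ := (Submodule.mem_span_range_iff_exists_fun _).1 ha
  -- b • (a • w) two ways
  have h1 : ∑ i : Fin j.1, (b * e i) • y (Fin.castLE j.2.le i) = ∑ i : Fin n, (a * c i) • y i := by
    calc ∑ i : Fin j.1, (b * e i) • y (Fin.castLE j.2.le i)
        = b • ∑ i : Fin j.1, e i • pre y j i := by
          rw [Finset.smul_sum]
          exact Finset.sum_congr rfl (fun i _ => by rw [smul_smul]; rfl)
      _ = b • (a • w) := by rw [he]
      _ = a • (b • w) := by rw [smul_comm]
      _ = ∑ i : Fin n, (a * c i) • y i := by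
          rw [hw, Finset.smul_sum]
          exact Finset.sum_congr rfl (fun i _ => by rw [smul_smul])
  have h2 : ∑ i : Fin n, ((a * c i) - if h : i.1 < j.1 then b * e ⟨i.1, h⟩ else 0) • y i = 0 := by
    have h3 := sum_castLE (le_of_lt j.2) (fun i : Fin j.1 => (b * e i) • y (Fin.castLE j.2.le i))
    rw [h1] at h3
    have h4 : ∑ i : Fin n, (if h : i.1 < j.1 then (b * e ⟨i.1, h⟩) • y (Fin.castLE j.2.le ⟨i.1, h⟩) else 0)
        = ∑ i : Fin n, (if h : i.1 < j.1 then b * e ⟨i.1, h⟩ else 0) • y i := by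
      refine Finset.sum_congr rfl (fun i _ => ?_)
      by_cases hi : i.1 < j.1
      · simp only [hi, dif_pos]
        congr 1
      · simp [hi]
    rw [h4] at h3
    simp only [sub_smul]
    rw [Finset.sum_sub_distrib, ← h3, sub_self]
  have h5 := Fintype.linearIndependent_iff.1 hy _ h2
  have h6 := h5 j
  simp only [lt_irrefl, dif_neg, not_false_iff, sub_zero] at h6
  rcases mul_eq_zero.1 h6 with h | h
  · exact h
  · exact absurd h hcj


lemma exists_extend {n q : ℕ} (y : Fin n → L) (x : Fin q → L)
    (hx : LinearIndependent (Polynomial k) x) (hq : n < q) :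
    ∃ j : Fin q, ∀ a : Polynomial k,
      a • x j ∈ Submodule.span (Polynomial k) (Set.range y) → a = 0 := by
  classical
  by_contra hno
  push_neg at hno
  choose a ha0 hamem using hno
  set b : Polynomial k := ∏ j : Fin q, a j with hb
  have hbne : b ≠ 0 := Finset.prod_ne_zero_iff.2 fun j _ => hamem j
  have hz : LinearIndependent (Polynomial k) (fun j => b • x j) := by
    rw [Fintype.linearIndependent_iff]
    intro g hg
    have : ∑ j : Fin q, (g j * b) • x j = 0 := by
      rw [← hg]; exact Finset.sum_congr rfl fun j _ => by rw [mul_smul]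
    have h2 := Fintype.linearIndependent_iff.1 hx _ this
    intro j
    rcases mul_eq_zero.1 (h2 j) with h | h
    · exact h
    · exact absurd h hbne
  have hsub : Set.range (fun j => b • x j) ≤
      (Submodule.span (Polynomial k) (Set.range y) : Set L) := by
    rintro _ ⟨j, rfl⟩
    have h1 : b = (∏ i ∈ Finset.univ.erase j, a i) * a j := by
      rw [hb, ← Finset.prod_erase_mul Finset.univ a (Finset.mem_univ j)]
    show b • x j ∈ Submodule.span (Polynomial k) (Set.range y)
    rw [h1, mul_smul]
    exact Submodule.smul_mem _ _ (ha0 j)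
  have hcard := linearIndependent_le_span_aux' _ hz (Set.range y) hsub
  simp only [Fintype.card_fin] at hcard
  have h2 : Fintype.card (Set.range y) ≤ n := by
    simpa using Fintype.card_range_le y
  omega


lemma snoc_lt {m : ℕ} (p : Fin m → L) (x : L) (l : Fin (m+1)) (h : l.1 < m) :
    (Fin.snoc p x : Fin (m+1) → L) l = p ⟨l.1, h⟩ := by
  simp only [Fin.snoc, h, dif_pos]
  rfl

lemma greedy_exists (N : L → WithBot ℝ)
    (hadd : ∀ x y : L, N (x + y) ≤ max (N x) (N y))
    (hsmul : ∀ (a : Polynomial k) (x : L), N (a • x) = degA a + N x)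
    (hzero : ∀ x : L, N x = ⊥ ↔ x = 0)
    (hfin : ∀ r : ℝ, ∃ S : Finset L,
      {x : L | N x ≤ (r : ℝ)} ⊆ (Submodule.span k (S : Set L) : Set L))
    {n : ℕ} (hrk : ∃ x : Fin n → L, LinearIndependent (Polynomial k) x) :
    ∀ i : ℕ, i ≤ n → ∃ y : Fin i → L, LinearIndependent (Polynomial k) y ∧
      ∀ (j : ℕ) (hj : j < i) (x : L),
        LinearIndependent (Polynomial k)
          (Fin.snoc (fun m : Fin j => y ⟨m.1, lt_trans m.2 hj⟩) x) →
        N (y ⟨j, hj⟩) ≤ N x := by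
  intro i
  induction i with
  | zero =>
    exact fun _ => ⟨Fin.elim0, linearIndependent_empty_type,
      fun j hj => absurd hj (Nat.not_lt_zero j)⟩
  | succ i ih =>
    intro hi
    obtain ⟨y, hyli, hymin⟩ := ih (le_trans (Nat.le_succ i) hi)
    set C : Set L := {x | LinearIndependent (Polynomial k) (Fin.snoc y x)} with hC
    have hCne : C.Nonempty := by
      obtain ⟨x, hx⟩ := hrk
      obtain ⟨j, hj⟩ := exists_extend y x hx (Nat.lt_of_succ_le hi)
      exact ⟨x j, snoc_li y (x j) hyli hj⟩
    have hC0 : ∀ x ∈ C, x ≠ 0 := by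
      intro x hx
      have h2 := hx.ne_zero (Fin.last i)
      rwa [Fin.snoc_last] at h2
    obtain ⟨x0, hx0C, hx0min⟩ := exists_min N hadd hsmul hzero hfin C hCne hC0
    refine ⟨Fin.snoc y x0, hx0C, ?_⟩
    intro j hj x hx
    by_cases hji : j < i
    · have hpre : (fun m : Fin j => (Fin.snoc y x0 : Fin (i+1) → L) ⟨m.1, lt_trans m.2 hj⟩) =
          (fun m : Fin j => y ⟨m.1, lt_trans m.2 hji⟩) := by
        funext m
        exact snoc_lt y x0 _ (lt_trans m.2 hji)
      rw [hpre] at hx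
      rw [snoc_lt y x0 ⟨j, hj⟩ hji]
      exact hymin j hji x hx
    · have hje : j = i := by omega
      subst hje
      have hpre : (fun m : Fin j => (Fin.snoc y x0 : Fin (j+1) → L) ⟨m.1, lt_trans m.2 hj⟩) = y := by
        funext m
        rw [snoc_lt y x0 _ m.2]
      rw [hpre] at hx
      have hlast : (⟨j, hj⟩ : Fin (j+1)) = Fin.last j := rfl
      rw [hlast, Fin.snoc_last]
      exact hx0min x hx


section Greedy

variable (N : L → WithBot ℝ)
  {n : ℕ} (y : Fin n → L)

lemma snoc_comp_eq (i j : Fin n) (hij : i ≤ j) :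
    ∃ f : Fin (i.1+1) → Fin n, Function.Injective f ∧
      (Fin.snoc (pre y i) (y j) : Fin (i.1+1) → L) = y ∘ f := by
  classical
  refine ⟨fun m => if h : m.1 < i.1 then ⟨m.1, lt_trans h i.2⟩ else j, ?_, ?_⟩
  · intro m m' hmm
    have hij' : i.1 ≤ j.1 := hij
    have hm2 := m.2
    have hm2' := m'.2
    by_cases h : m.1 < i.1 <;> by_cases h' : m'.1 < i.1 <;>
        rw [Fin.ext_iff] at hmm ⊢ <;>
      (try simp only [h, h', dif_pos, dif_neg, not_false_iff, Fin.val_mk] at hmm) <;> omega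
  · funext m
    by_cases h : m.1 < i.1
    · rw [snoc_lt _ _ _ h]
      simp only [Function.comp_apply, h, dif_pos]
      rfl
    · have hm2 := m.2
      have hm : m = Fin.last i.1 := Fin.ext (by simp only [Fin.val_last]; omega)
      subst hm
      rw [Fin.snoc_last]
      simp only [Function.comp_apply, h, dif_neg, not_false_iff]

lemma N_y_mono (hyli : LinearIndependent (Polynomial k) y)
    (hymin : ∀ (j : Fin n) (x : L),
      LinearIndependent (Polynomial k) (Fin.snoc (pre y j) x : Fin (j.1+1) → L) →
      N (y j) ≤ N x)
    (i j : Fin n) (hij : i ≤ j) : N (y i) ≤ N (y j) := by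
  obtain ⟨f, hfinj, hfeq⟩ := snoc_comp_eq y i j hij
  refine hymin i (y j) ?_
  rw [hfeq]
  exact hyli.comp f hfinj

lemma orth_le
    (hadd : ∀ x y : L, N (x + y) ≤ max (N x) (N y))
    (hsmul : ∀ (a : Polynomial k) (x : L), N (a • x) = degA a + N x)
    (hzero : ∀ x : L, N x = ⊥ ↔ x = 0)
    (a : Fin n → Polynomial k) :
    N (∑ i, a i • y i) ≤ Finset.univ.sup (fun i => degA (a i) + N (y i)) := by
  refine le_trans (N_sum_le N hadd hzero _ _) ?_
  exact Finset.sup_mono_fun (fun i _ => le_of_eq (hsmul _ _))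

end Greedy


lemma torsion_free (N : L → WithBot ℝ)
    (hsmul : ∀ (a : Polynomial k) (x : L), N (a • x) = degA a + N x)
    (hzero : ∀ x : L, N x = ⊥ ↔ x = 0)
    {a : Polynomial k} {x : L} (h : a • x = 0) (ha : a ≠ 0) : x = 0 := by
  have h1 : N (a • x) = ⊥ := by rw [h, N_zero N hzero]
  rw [hsmul] at h1
  rcases WithBot.add_eq_bot.1 h1 with h2 | h2
  · exact absurd h2 (degA_ne_bot a ha)
  · exact (hzero x).1 h2

section Greedy2

variable (N : L → WithBot ℝ)
  {n : ℕ} (y : Fin n → L)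

lemma N_y_eq_r
    (hyli : LinearIndependent (Polynomial k) y)
    (hymin : ∀ (j : Fin n) (x : L),
      LinearIndependent (Polynomial k) (Fin.snoc (pre y j) x : Fin (j.1+1) → L) →
      N (y j) ≤ N x)
    (i : Fin n) (ri : ℝ)
    (hleast : IsLeast {w : WithBot ℝ | ∃ x : Fin (i.1 + 1) → L,
        LinearIndependent (Polynomial k) x ∧
        Finset.univ.sup (fun j => N (x j)) = w} ((ri : ℝ) : WithBot ℝ)) :
    N (y i) = ((ri : ℝ) : WithBot ℝ) := by
  have hsucc : i.1 + 1 ≤ n := i.2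
  refine le_antisymm ?_ ?_
  ·
    -- hleast.2 : lower bound, N (y i) ∈ set gives ri ≤ N (y i). For ≤ we need the other.
    -- lower: some tuple achieves ri; exchange gives N (y i) ≤ ri.
    obtain ⟨x, hxli, hxsup⟩ := hleast.1
    obtain ⟨j, hj⟩ := exists_extend (pre y i) x hxli (Nat.lt_succ_self i.1)
    have hfeas : LinearIndependent (Polynomial k) (Fin.snoc (pre y i) (x j) : Fin (i.1+1) → L) :=
      snoc_li _ _ (pre_li y hyli i) hj
    refine le_trans (hymin i (x j) hfeas) ?_
    rw [← hxsup]
    exact Finset.le_sup (f := fun j => N (x j)) (Finset.mem_univ j)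
  · refine hleast.2 ?_
    refine ⟨fun m => y (Fin.castLE hsucc m), hyli.comp _ (Fin.castLE_injective _), ?_⟩
    refine le_antisymm (Finset.sup_le fun m _ => ?_) ?_
    · refine N_y_mono N y hyli hymin _ i ?_
      exact Fin.mk_le_mk.2 (Nat.lt_succ_iff.1 m.2)
    · have h1 : y (Fin.castLE hsucc (Fin.last i.1)) = y i := by
        congr 1
      rw [← h1]
      exact Finset.le_sup (f := fun m => N (y (Fin.castLE hsucc m))) (Finset.mem_univ (Fin.last i.1))

lemma greedy_span
    (hadd : ∀ x y : L, N (x + y) ≤ max (N x) (N y))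
    (hsmul : ∀ (a : Polynomial k) (x : L), N (a • x) = degA a + N x)
    (hzero : ∀ x : L, N x = ⊥ ↔ x = 0)
    (hyli : LinearIndependent (Polynomial k) y)
    (hymin : ∀ (j : Fin n) (x : L),
      LinearIndependent (Polynomial k) (Fin.snoc (pre y j) x : Fin (j.1+1) → L) →
      N (y j) ≤ N x)
    (hmax : ¬ ∃ x : Fin (n + 1) → L, LinearIndependent (Polynomial k) x)
    (x : L) : x ∈ Submodule.span (Polynomial k) (Set.range y) := by
  classical
  by_contra hxM
  set M := Submodule.span (Polynomial k) (Set.range y) with hM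
  -- there is b ≠ 0 with b • x ∈ M
  have hexb : ∃ b : Polynomial k, b ≠ 0 ∧ b • x ∈ M := by
    by_contra hno
    push_neg at hno
    refine hmax ⟨Fin.snoc y x, snoc_li y x hyli ?_⟩
    intro a ha
    by_contra ha0
    exact absurd ha (hno a ha0).elim
  obtain ⟨b, hb0, hbM⟩ := hexb
  set b' : Polynomial k := b * Polynomial.C (b.leadingCoeff)⁻¹ with hb'
  have hb'mon : b'.Monic := Polynomial.monic_mul_leadingCoeff_inv hb0
  have hb'0 : b' ≠ 0 := hb'mon.ne_zero
  have hb'M : b' • x ∈ M := by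
    rw [hb', mul_comm, mul_smul]
    exact Submodule.smul_mem _ _ hbM
  obtain ⟨a, haeq⟩ := (Submodule.mem_span_range_iff_exists_fun _).1 hb'M
  set s : Fin n → Polynomial k := fun i => a i %ₘ b' with hs
  set q : Fin n → Polynomial k := fun i => a i /ₘ b' with hq
  set x' : L := x - ∑ i, q i • y i with hx'
  have hx'M : x' ∉ M := by
    intro hmem
    apply hxM
    have : x = x' + ∑ i, q i • y i := by rw [hx']; abel
    rw [this]
    exact Submodule.add_mem _ hmem (Submodule.sum_mem _ fun i _ =>
      Submodule.smul_mem _ _ (Submodule.subset_span ⟨i, rfl⟩))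
  have hbx' : b' • x' = ∑ i, s i • y i := by
    rw [hx', smul_sub, ← haeq, Finset.smul_sum]
    rw [← Finset.sum_sub_distrib]
    refine Finset.sum_congr rfl fun i _ => ?_
    rw [smul_smul, ← sub_smul]
    congr 1
    have h5 := Polynomial.modByMonic_add_div (a i) b'
    rw [hs]
    simp only
    linear_combination h5.symm
  have hsne : ∃ j, s j ≠ 0 := by
    by_contra hall
    push_neg at hall
    have : b' • x' = 0 := by
      rw [hbx']
      refine Finset.sum_eq_zero fun i _ => by rw [hall i, zero_smul]
    have hx'0 : x' = 0 := torsion_free N hsmul hzero this hb'0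
    exact hx'M (hx'0 ▸ Submodule.zero_mem M)
  set T : Finset (Fin n) := Finset.univ.filter (fun i => s i ≠ 0) with hT
  have hTne : T.Nonempty := by
    obtain ⟨j, hj⟩ := hsne
    exact ⟨j, Finset.mem_filter.2 ⟨Finset.mem_univ j, hj⟩⟩
  set j : Fin n := T.max' hTne with hj
  have hjT : j ∈ T := T.max'_mem hTne
  have hsj : s j ≠ 0 := (Finset.mem_filter.1 hjT).2
  have hfeas : LinearIndependent (Polynomial k)
      (Fin.snoc (pre y j) x' : Fin (j.1+1) → L) :=
    feas y hyli j b' s hsj x' hbx'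
  have hmin := hymin j x' hfeas
  -- norm computation: N x' < N (y j)
  have hyj0 : y j ≠ 0 := hyli.ne_zero j
  obtain ⟨vj, hvj⟩ := WithBot.ne_bot_iff_exists.1 (fun h => hyj0 ((hzero _).1 h))
  have hdb' : degA b' = ((b'.natDegree : ℝ) : WithBot ℝ) := degA_eq_natDegree b' hb'0
  have hsup : N (b' • x') < degA b' + N (y j) := by
    rw [hbx']
    refine lt_of_le_of_lt (orth_le N y hadd hsmul hzero s) ?_
    have hbot : (⊥ : WithBot ℝ) < degA b' + N (y j) := by
      rw [hdb', ← hvj, ← WithBot.coe_add]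
      exact WithBot.bot_lt_coe _
    rw [Finset.sup_lt_iff hbot]
    intro i _
    by_cases hsi : s i = 0
    · rw [hsi, degA_zero]
      simpa using hbot
    · have hiT : i ∈ T := Finset.mem_filter.2 ⟨Finset.mem_univ i, hsi⟩
      have hij : i ≤ j := Finset.le_max' T i hiT
      have hyile : N (y i) ≤ N (y j) := N_y_mono N y hyli hymin i j hij
      have hyi0 : y i ≠ 0 := hyli.ne_zero i
      obtain ⟨vi, hvi⟩ := WithBot.ne_bot_iff_exists.1 (fun h => hyi0 ((hzero _).1 h))
      have hdeglt : (s i).natDegree < b'.natDegree := by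
        refine Polynomial.natDegree_lt_natDegree hsi ?_
        exact Polynomial.degree_modByMonic_lt (a i) hb'mon
      rw [degA_eq_natDegree _ hsi, ← hvi, hdb', ← hvj, ← WithBot.coe_add, ← WithBot.coe_add,
        WithBot.coe_lt_coe]
      have hvle : vi ≤ vj := by
        rw [← WithBot.coe_le_coe, hvi, hvj]
        exact hyile
      have : ((s i).natDegree : ℝ) < (b'.natDegree : ℝ) := by exact_mod_cast hdeglt
      linarith
  rw [hsmul] at hsup
  have hlt : N x' < N (y j) := by
    refine (WithBot.add_lt_add_iff_left (x := degA b') ?_).1 hsup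
    exact degA_ne_bot b' hb'0
  exact absurd hmin (not_le.2 hlt)

end Greedy2


section Greedy3

variable (N : L → WithBot ℝ)
  {n : ℕ} (y : Fin n → L)

lemma orth_eq
    (hadd : ∀ x y : L, N (x + y) ≤ max (N x) (N y))
    (hsmul : ∀ (a : Polynomial k) (x : L), N (a • x) = degA a + N x)
    (hzero : ∀ x : L, N x = ⊥ ↔ x = 0)
    (hyli : LinearIndependent (Polynomial k) y)
    (hymin : ∀ (j : Fin n) (x : L),
      LinearIndependent (Polynomial k) (Fin.snoc (pre y j) x : Fin (j.1+1) → L) →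
      N (y j) ≤ N x)
    (a : Fin n → Polynomial k) :
    N (∑ i, a i • y i) = Finset.univ.sup (fun i => degA (a i) + N (y i)) := by
  classical
  refine le_antisymm (orth_le N y hadd hsmul hzero a) ?_
  by_contra hlt
  push_neg at hlt
  set x : L := ∑ i, a i • y i with hx
  set m : WithBot ℝ := Finset.univ.sup (fun i => degA (a i) + N (y i)) with hm
  have hbotm : (⊥ : WithBot ℝ) < m := lt_of_le_of_lt bot_le hlt
  have hmne : m ≠ ⊥ := hbotm.ne'
  obtain ⟨mr, hmr⟩ := WithBot.ne_bot_iff_exists.1 hmne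
  -- some index attains the sup
  have hune : (Finset.univ : Finset (Fin n)).Nonempty := by
    by_contra hemp
    rw [Finset.not_nonempty_iff_eq_empty] at hemp
    rw [hm, hemp, Finset.sup_empty] at hmne
    exact hmne rfl
  set T : Finset (Fin n) := Finset.univ.filter (fun i => degA (a i) + N (y i) = m) with hT
  have hTne : T.Nonempty := by
    obtain ⟨i₁, _, hi₁⟩ := Finset.exists_mem_eq_sup Finset.univ hune
      (fun i => degA (a i) + N (y i))
    exact ⟨i₁, Finset.mem_filter.2 ⟨Finset.mem_univ i₁, (hm ▸ hi₁).symm⟩⟩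
  set j : Fin n := T.max' hTne with hj
  have hjT : j ∈ T := T.max'_mem hTne
  have hy0 : ∀ i : Fin n, y i ≠ 0 := fun i => hyli.ne_zero i
  have hyv : ∀ i : Fin n, N (y i) ≠ ⊥ := fun i h => hy0 i ((hzero _).1 h)
  have haT : ∀ i ∈ T, a i ≠ 0 := by
    intro i hiT hai
    have := (Finset.mem_filter.1 hiT).2
    rw [hai, degA_zero, WithBot.bot_add] at this
    exact hmne this.symm
  set d : Fin n → ℕ := fun i => (a i).natDegree with hd
  -- real values
  have hterm : ∀ i ∈ T, ((d i : ℝ) : WithBot ℝ) + N (y i) = m := by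
    intro i hiT
    have h1 := (Finset.mem_filter.1 hiT).2
    rw [degA_eq_natDegree _ (haT i hiT)] at h1
    exact h1
  have hdge : ∀ i ∈ T, d j ≤ d i := by
    intro i hiT
    have hij : i ≤ j := Finset.le_max' T i hiT
    have hle : N (y i) ≤ N (y j) := N_y_mono N y hyli hymin i j hij
    obtain ⟨vi, hvi⟩ := WithBot.ne_bot_iff_exists.1 (hyv i)
    obtain ⟨vj, hvj⟩ := WithBot.ne_bot_iff_exists.1 (hyv j)
    have h1 := hterm i hiT
    have h2 := hterm j hjT
    rw [← hvi, ← WithBot.coe_add, ← hmr] at h1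
    rw [← hvj, ← WithBot.coe_add, ← hmr] at h2
    have h1' : (d i : ℝ) + vi = mr := WithBot.coe_inj.1 h1
    have h2' : (d j : ℝ) + vj = mr := WithBot.coe_inj.1 h2
    have hvle : vi ≤ vj := by rw [← WithBot.coe_le_coe, hvi, hvj]; exact hle
    have : (d j : ℝ) ≤ (d i : ℝ) := by linarith
    exact_mod_cast this
  set cf : Fin n → Polynomial k := fun i =>
    if i ∈ T then Polynomial.C ((a i).leadingCoeff) * Polynomial.X ^ (d i - d j) else 0
    with hcf
  set w : L := ∑ i, cf i • y i with hw
  have hcfj : cf j ≠ 0 := by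
    rw [hcf]
    simp only [hjT, if_pos, Nat.sub_self, pow_zero, mul_one]
    exact fun h => haT j hjT (Polynomial.leadingCoeff_eq_zero.1 (Polynomial.C_eq_zero.1 h))
  -- u = X^{d j} • w
  set u : L := ∑ i, (if i ∈ T then Polynomial.C ((a i).leadingCoeff) * Polynomial.X ^ (d i) else 0) • y i with hu
  have hXw : (Polynomial.X ^ (d j) : Polynomial k) • w = u := by
    rw [hw, hu, Finset.smul_sum]
    refine Finset.sum_congr rfl fun i _ => ?_
    rw [smul_smul, hcf]
    by_cases hiT : i ∈ T
    · have hd1 := hdge i hiT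
      simp only [hiT, if_pos]
      rw [mul_left_comm, ← pow_add]
      congr 3
      omega
    · simp [hiT]
  -- x - u
  set b : Fin n → Polynomial k := fun i =>
    a i - (if i ∈ T then Polynomial.C ((a i).leadingCoeff) * Polynomial.X ^ (d i) else 0) with hb
  have hxu : x - u = ∑ i, b i • y i := by
    rw [hx, hu, ← Finset.sum_sub_distrib]
    exact Finset.sum_congr rfl fun i _ => by rw [hb]; simp only [sub_smul]
  have hblt : ∀ i : Fin n, degA (b i) + N (y i) < m := by
    intro i
    by_cases hiT : i ∈ T
    · have hai := haT i hiT
      have hbi : b i = (a i).eraseLead := by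
        rw [hb]
        simp only [hiT, if_pos]
        have := Polynomial.eraseLead_add_C_mul_X_pow (a i)
        linear_combination this.symm
      by_cases hbz : b i = 0
      · rw [hbz, degA_zero, WithBot.bot_add]
        exact hbotm
      · have hdlt : (b i).natDegree < d i := by
          refine Polynomial.natDegree_lt_natDegree hbz ?_
          rw [hbi]
          exact Polynomial.degree_eraseLead_lt hai
        obtain ⟨vi, hvi⟩ := WithBot.ne_bot_iff_exists.1 (hyv i)
        have h1 := hterm i hiT
        rw [degA_eq_natDegree _ hbz, ← hvi, ← WithBot.coe_add, ← h1, ← hvi, ← WithBot.coe_add,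
          WithBot.coe_lt_coe]
        have : ((b i).natDegree : ℝ) < (d i : ℝ) := by exact_mod_cast hdlt
        linarith
    · have hbi : b i = a i := by rw [hb]; simp only [hiT, if_neg, not_false_iff, sub_zero]
      rw [hbi]
      have hle : degA (a i) + N (y i) ≤ m := hm ▸ Finset.le_sup (f := fun i => degA (a i) + N (y i)) (Finset.mem_univ i)
      refine lt_of_le_of_ne hle ?_
      intro heq
      exact hiT (Finset.mem_filter.2 ⟨Finset.mem_univ i, heq⟩)
  have hxult : N (x - u) < m := by
    rw [hxu]
    refine lt_of_le_of_lt (orth_le N y hadd hsmul hzero b) ?_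
    rw [Finset.sup_lt_iff hbotm]
    exact fun i _ => hblt i
  have hult : N u < m := by
    have h2 : N (x + -(x - u)) ≤ max (N x) (N (-(x - u))) := hadd x (-(x - u))
    rw [N_neg N hsmul] at h2
    have h1 : x + -(x - u) = u := by abel
    rw [h1] at h2
    exact lt_of_le_of_lt h2 (max_lt hlt hxult)
  -- N w < N (y j)
  have hNu : N u = ((d j : ℝ) : WithBot ℝ) + N w := by
    rw [← hXw, hsmul, degA_X_pow]
  have hwlt : N w < N (y j) := by
    have h1 : ((d j : ℝ) : WithBot ℝ) + N w < ((d j : ℝ) : WithBot ℝ) + N (y j) := by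
      rw [← hNu]
      calc N u < m := hult
        _ = ((d j : ℝ) : WithBot ℝ) + N (y j) := (hterm j hjT).symm
    exact (WithBot.add_lt_add_iff_left (WithBot.coe_ne_bot)).1 h1
  have hfeas : LinearIndependent (Polynomial k)
      (Fin.snoc (pre y j) w : Fin (j.1+1) → L) := by
    refine feas y hyli j 1 cf hcfj w ?_
    rw [one_smul, hw]
  exact absurd (hymin j w hfeas) (not_le.2 hwlt)

end Greedy3


end Stmt12Aux

/-- Two lattices over `A = k[t]` (both of rank `n`, with successive
minima vectors `r` and `r'`) are isometric iff they have the same vector of successive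
minima. -/
theorem stmt12 {k : Type*} [Field k] {L L' : Type*} [AddCommGroup L] [AddCommGroup L']
    [Module (Polynomial k) L] [Module (Polynomial k) L']
    [Module k L] [Module k L'] [IsScalarTower k (Polynomial k) L]
    [IsScalarTower k (Polynomial k) L']
    [Module.Finite (Polynomial k) L] [Module.Finite (Polynomial k) L']
    (N : L → WithBot ℝ) (N' : L' → WithBot ℝ)
    (hadd : ∀ x y : L, N (x + y) ≤ max (N x) (N y))
    (hadd' : ∀ x y : L', N' (x + y) ≤ max (N' x) (N' y))
    (hsmul : ∀ (a : Polynomial k) (x : L), N (a • x) = degA a + N x)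
    (hsmul' : ∀ (a : Polynomial k) (x : L'), N' (a • x) = degA a + N' x)
    (hzero : ∀ x : L, N x = ⊥ ↔ x = 0)
    (hzero' : ∀ x : L', N' x = ⊥ ↔ x = 0)
    (hfin : ∀ r : ℝ, ∃ S : Finset L,
      {x : L | N x ≤ (r : ℝ)} ⊆ (Submodule.span k (S : Set L) : Set L))
    (hfin' : ∀ r : ℝ, ∃ S : Finset L',
      {x : L' | N' x ≤ (r : ℝ)} ⊆ (Submodule.span k (S : Set L') : Set L'))
    (n : ℕ)
    (hrk : ∃ x : Fin n → L, LinearIndependent (Polynomial k) x)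
    (hrk' : ∃ x : Fin n → L', LinearIndependent (Polynomial k) x)
    (hmax : ¬ ∃ x : Fin (n + 1) → L, LinearIndependent (Polynomial k) x)
    (hmax' : ¬ ∃ x : Fin (n + 1) → L', LinearIndependent (Polynomial k) x)
    (r r' : Fin n → ℝ) (hmono : Monotone r) (hmono' : Monotone r')
    (hsm : ∀ i : Fin n, IsLeast
      {w : WithBot ℝ | ∃ x : Fin (i.1 + 1) → L,
        LinearIndependent (Polynomial k) x ∧
        Finset.univ.sup (fun j => N (x j)) = w}
      ((r i : ℝ) : WithBot ℝ))
    (hsm' : ∀ i : Fin n, IsLeast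
      {w : WithBot ℝ | ∃ x : Fin (i.1 + 1) → L',
        LinearIndependent (Polynomial k) x ∧
        Finset.univ.sup (fun j => N' (x j)) = w}
      ((r' i : ℝ) : WithBot ℝ)) :
    (∃ e : L ≃ₗ[Polynomial k] L', ∀ x : L, N' (e x) = N x) ↔ r = r' := by
  classical
  constructor
  · rintro ⟨e, he⟩
    funext i
    have hset : {w : WithBot ℝ | ∃ x : Fin (i.1 + 1) → L,
        LinearIndependent (Polynomial k) x ∧
        Finset.univ.sup (fun j => N (x j)) = w} =
        {w : WithBot ℝ | ∃ x : Fin (i.1 + 1) → L',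
        LinearIndependent (Polynomial k) x ∧
        Finset.univ.sup (fun j => N' (x j)) = w} := by
      ext w
      constructor
      · rintro ⟨x, hxli, hxsup⟩
        refine ⟨fun j => e (x j), ?_, ?_⟩
        · exact hxli.map' e.toLinearMap e.ker
        · rw [← hxsup]
          exact Finset.sup_congr rfl fun j _ => he (x j)
      · rintro ⟨x, hxli, hxsup⟩
        refine ⟨fun j => e.symm (x j), ?_, ?_⟩
        · exact hxli.map' e.symm.toLinearMap e.symm.ker
        · rw [← hxsup]
          refine Finset.sup_congr rfl fun j _ => ?_
          rw [← he (e.symm (x j)), LinearEquiv.apply_symm_apply]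
    have h1 := hsm i
    have h2 := hsm' i
    rw [hset] at h1
    have := h1.unique h2
    exact_mod_cast this
  · intro hrr
    -- greedy bases
    obtain ⟨y, hyli, hymin₀⟩ :=
      Stmt12Aux.greedy_exists N hadd hsmul hzero hfin hrk n le_rfl
    obtain ⟨y', hyli', hymin₀'⟩ :=
      Stmt12Aux.greedy_exists N' hadd' hsmul' hzero' hfin' hrk' n le_rfl
    have hymin : ∀ (j : Fin n) (x : L),
        LinearIndependent (Polynomial k)
          (Fin.snoc (Stmt12Aux.pre y j) x : Fin (j.1+1) → L) → N (y j) ≤ N x :=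
      fun j x hx => hymin₀ j.1 j.2 x hx
    have hymin' : ∀ (j : Fin n) (x : L'),
        LinearIndependent (Polynomial k)
          (Fin.snoc (Stmt12Aux.pre y' j) x : Fin (j.1+1) → L') → N' (y' j) ≤ N' x :=
      fun j x hx => hymin₀' j.1 j.2 x hx
    have hNyr : ∀ i : Fin n, N (y i) = ((r i : ℝ) : WithBot ℝ) :=
      fun i => Stmt12Aux.N_y_eq_r N y hyli hymin i (r i) (hsm i)
    have hNyr' : ∀ i : Fin n, N' (y' i) = ((r' i : ℝ) : WithBot ℝ) :=
      fun i => Stmt12Aux.N_y_eq_r N' y' hyli' hymin' i (r' i) (hsm' i)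
    have hsp : ⊤ ≤ Submodule.span (Polynomial k) (Set.range y) :=
      fun x _ => Stmt12Aux.greedy_span N y hadd hsmul hzero hyli hymin hmax x
    have hsp' : ⊤ ≤ Submodule.span (Polynomial k) (Set.range y') :=
      fun x _ => Stmt12Aux.greedy_span N' y' hadd' hsmul' hzero' hyli' hymin' hmax' x
    set B : Module.Basis (Fin n) (Polynomial k) L := Module.Basis.mk hyli hsp with hB
    set B' : Module.Basis (Fin n) (Polynomial k) L' := Module.Basis.mk hyli' hsp' with hB'
    refine ⟨B.equiv B' (Equiv.refl _), fun x => ?_⟩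
    set c : Fin n → Polynomial k := fun i => B.repr x i with hc
    have hxe : x = ∑ i, c i • y i := by
      conv_lhs => rw [← B.sum_repr x]
      exact Finset.sum_congr rfl fun i _ => by rw [Module.Basis.mk_apply]
    have hex : (B.equiv B' (Equiv.refl _)) x = ∑ i, c i • y' i := by
      conv_lhs => rw [hxe]
      rw [map_sum]
      refine Finset.sum_congr rfl fun i _ => ?_
      rw [map_smul]
      congr 1
      have : y i = B i := (Module.Basis.mk_apply hyli hsp i).symm
      rw [this, Module.Basis.equiv_apply, Equiv.refl_apply, Module.Basis.mk_apply]
    rw [hex]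
    conv_rhs => rw [hxe]
    rw [Stmt12Aux.orth_eq N' y' hadd' hsmul' hzero' hyli' hymin' c,
      Stmt12Aux.orth_eq N y hadd hsmul hzero hyli hymin c]
    refine Finset.sup_congr rfl fun i _ => ?_
    rw [hNyr i, hNyr' i, hrr]
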